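/- Let x₀* be a fixed point in the positive orthant of the conservative Lotka-Volterra system ẋ = diag(x)(λ + K·D·x) with K skew-symmetric, D diagonal and definite (all diagonal entries of the same sign), λ = K·L. Then x₀* is Lyapunov stable. -/

import Mathlib

open Real Finset Matrix

lemma skew_quad {m : ℕ} (K : Matrix (Fin m) (Fin m) ℝ) (hK : Kᵀ = -K) (z : Fin m → ℝ) :
    z ⬝ᵥ K.mulVec z = 0 := by
  have h : ∀ i j, K j i = -K i j := fun i j => by
    have := congrFun (congrFun hK i) j
    simpa [Matrix.transpose_apply] using this
  have e : z ⬝ᵥ K.mulVec z = ∑ i, ∑ j, z i * (K i j * z j) := by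
    simp [dotProduct, Matrix.mulVec, Finset.mul_sum]
  have e2 : z ⬝ᵥ K.mulVec z = -(z ⬝ᵥ K.mulVec z) := by
    nth_rewrite 1 [e]
    rw [Finset.sum_comm, e, ← Finset.sum_neg_distrib]
    refine Finset.sum_congr rfl fun j _ => ?_
    rw [← Finset.sum_neg_distrib]
    refine Finset.sum_congr rfl fun i _ => ?_
    rw [h i j]; ring
  linarith

lemma log_ineq_le (a b : ℝ) (ha : 0 < a) (hb : 0 < b) : b * (Real.log a - Real.log b) ≤ a - b := by
  have h := Real.log_le_sub_one_of_pos (show 0 < a / b by positivity)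
  rw [Real.log_div (ne_of_gt ha) (ne_of_gt hb)] at h
  have hba : b * (a / b) = a := by field_simp
  nlinarith [mul_le_mul_of_nonneg_left h hb.le]

lemma log_ineq_lt (a b : ℝ) (ha : 0 < a) (hb : 0 < b) (hab : a ≠ b) :
    b * (Real.log a - Real.log b) < a - b := by
  have h := Real.log_lt_sub_one_of_pos (show 0 < a / b by positivity) (by
    intro h; apply hab; field_simp at h; linarith)
  rw [Real.log_div (ne_of_gt ha) (ne_of_gt hb)] at h
  have hba : b * (a / b) = a := by field_simp
  nlinarith [mul_lt_mul_of_pos_left h hb]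

theorem conservative_lv_fixed_point_stable (m : ℕ)
    (K : Matrix (Fin m) (Fin m) ℝ) (hK : Kᵀ = -K)
    (d : Fin m → ℝ) (hd : (∀ i, 0 < d i) ∨ (∀ i, d i < 0))
    (L : Fin m → ℝ)
    (lam : Fin m → ℝ) (hlam : lam = K.mulVec L)
    (F : (Fin m → ℝ) → (Fin m → ℝ))
    (hF : F = fun x i => x i * (lam i + ((K * Matrix.diagonal d).mulVec x) i))
    (x₀ : Fin m → ℝ) (hx₀pos : ∀ i, 0 < x₀ i) (hfix : F x₀ = 0) :
    ∀ ε > (0:ℝ), ∃ δ > (0:ℝ), ∀ x : ℝ → (Fin m → ℝ),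
      (∀ t : ℝ, 0 ≤ t → HasDerivAt x (F (x t)) t) →
      ‖x 0 - x₀‖ < δ → ∀ t > (0:ℝ), ‖x t - x₀‖ < ε := by
  intro ε hε
  rcases Nat.eq_zero_or_pos m with hm | hm
  · refine ⟨1, one_pos, fun x _ _ t _ => ?_⟩
    subst hm
    have : x t - x₀ = 0 := Subsingleton.elim _ _
    rw [this, norm_zero]; exact hε
  -- m ≥ 1
  haveI : Nonempty (Fin m) := ⟨⟨0, hm⟩⟩
  set A := K * Matrix.diagonal d with hA
  -- sign
  obtain ⟨s, hsd⟩ : ∃ s : ℝ, ∀ i, 0 < s * d i := by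
    rcases hd with h | h
    · exact ⟨1, fun i => by simpa using h i⟩
    · exact ⟨-1, fun i => by simpa using h i⟩
  set c : Fin m → ℝ := fun i => s * d i with hc
  -- fixed point equation
  have hlam0 : ∀ i, lam i = -(A.mulVec x₀) i := by
    intro i
    have h0 : F x₀ i = 0 := by rw [hfix]; rfl
    rw [hF] at h0
    simp only at h0
    rcases mul_eq_zero.mp h0 with h | h
    · exact absurd h (ne_of_gt (hx₀pos i))
    · linarith
  have hFform : ∀ p : Fin m → ℝ, ∀ i, F p i = p i * (A.mulVec (p - x₀)) i := by
    intro p i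
    rw [hF]
    simp only
    rw [Matrix.mulVec_sub]
    have := hlam0 i
    simp only [Pi.sub_apply]
    rw [this]; ring
  -- Lyapunov function
  set W : (Fin m → ℝ) → ℝ := fun y => ∑ i, c i * (y i - x₀ i * Real.log (y i)) with hW
  have hWcontAt : ∀ y : Fin m → ℝ, (∀ i, 0 < y i) → ContinuousAt W y := by
    intro y hy
    apply tendsto_finset_sum
    intro i _
    have hlogc : ContinuousAt (fun p : Fin m → ℝ => Real.log (p i)) y :=
      ContinuousAt.comp (x := y) (Real.continuousAt_log (ne_of_gt (hy i)))
        ((continuous_apply i).continuousAt)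
    exact continuousAt_const.mul (((continuous_apply i).continuousAt).sub
      (continuousAt_const.mul hlogc))
  -- strict minimum
  have hWmin : ∀ y : Fin m → ℝ, (∀ i, 0 < y i) → y ≠ x₀ → W x₀ < W y := by
    intro y hy hne
    apply Finset.sum_lt_sum
    · intro i _
      have h1 := log_ineq_le (y i) (x₀ i) (hy i) (hx₀pos i)
      have hci : 0 < c i := hsd i
      have h2 : x₀ i - x₀ i * Real.log (x₀ i) ≤ y i - x₀ i * Real.log (y i) := by nlinarith
      exact mul_le_mul_of_nonneg_left h2 hci.le
    · obtain ⟨i, hi⟩ : ∃ i, y i ≠ x₀ i := by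
        by_contra h; push_neg at h; exact hne (funext h)
      refine ⟨i, Finset.mem_univ i, ?_⟩
      have h1 := log_ineq_lt (y i) (x₀ i) (hy i) (hx₀pos i) hi
      have hci : 0 < c i := hsd i
      have h2 : x₀ i - x₀ i * Real.log (x₀ i) < y i - x₀ i * Real.log (y i) := by nlinarith
      exact mul_lt_mul_of_pos_left h2 hci
  -- radius
  set ρ : ℝ := Finset.univ.inf' Finset.univ_nonempty x₀ with hρ
  have hρpos : 0 < ρ := by
    rw [hρ, Finset.lt_inf'_iff]
    exact fun i _ => hx₀pos i
  have hρle : ∀ i, ρ ≤ x₀ i := fun i => Finset.inf'_le _ (Finset.mem_univ i)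
  set r : ℝ := min (ε / 2) (ρ / 2) with hr
  have hrpos : 0 < r := lt_min (by linarith) (by linarith)
  have hrε : r < ε := lt_of_le_of_lt (min_le_left _ _) (by linarith)
  -- points in closed ball are positive
  have hball_pos : ∀ y : Fin m → ℝ, ‖y - x₀‖ ≤ r → ∀ i, 0 < y i := by
    intro y hyr i
    have h1 : |y i - x₀ i| ≤ ‖y - x₀‖ := by
      have := norm_le_pi_norm (y - x₀) i
      simpa using this
    have h2 : r ≤ ρ / 2 := min_le_right _ _
    have := hρle i
    have := abs_le.mp (le_trans h1 hyr)
    linarith [this.1, this.2, hρpos]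
  -- minimum of W on the sphere of radius r
  have hsne : (Metric.sphere x₀ r).Nonempty := NormedSpace.sphere_nonempty.mpr hrpos.le
  have hsphere_norm : ∀ y ∈ Metric.sphere x₀ r, ‖y - x₀‖ = r := by
    intro y hy
    rw [← dist_eq_norm]
    exact hy
  obtain ⟨y₀, hy₀mem, hy₀min⟩ := (isCompact_sphere x₀ r).exists_isMinOn hsne
    (fun y hy => (hWcontAt y (hball_pos y (hsphere_norm y hy).le)).continuousWithinAt)
  set M := W y₀ with hM
  have hy₀norm : ‖y₀ - x₀‖ = r := hsphere_norm y₀ hy₀mem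
  have hWxM : W x₀ < M := by
    apply hWmin y₀ (hball_pos _ hy₀norm.le)
    intro h
    rw [h, sub_self, norm_zero] at hy₀norm
    exact absurd hy₀norm.symm (ne_of_gt hrpos)
  -- choose δ
  have hnhds : W ⁻¹' Set.Iio M ∈ nhds x₀ :=
    (hWcontAt x₀ hx₀pos).preimage_mem_nhds (Iio_mem_nhds hWxM)
  obtain ⟨δ', hδ'pos, hδ'⟩ := Metric.mem_nhds_iff.mp hnhds
  refine ⟨min δ' r, lt_min hδ'pos hrpos, fun x hx hx0 => ?_⟩
  by_contra hcon
  push_neg at hcon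
  obtain ⟨t₂, ht₂pos, ht₂⟩ := hcon
  have hxc : ContinuousOn x (Set.Ici 0) := fun t ht => ((hx t ht).continuousAt).continuousWithinAt
  set B := Set.Ici (0:ℝ) ∩ (fun t => ‖x t - x₀‖) ⁻¹' Set.Ici r with hB
  have hBclosed : IsClosed B :=
    ContinuousOn.preimage_isClosed_of_isClosed ((hxc.sub continuousOn_const).norm)
      isClosed_Ici isClosed_Ici
  have hBne : t₂ ∈ B := ⟨le_of_lt ht₂pos, le_trans hrε.le ht₂⟩
  have hBbdd : BddBelow B := ⟨0, fun t ht => ht.1⟩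
  set t₁ := sInf B with ht₁
  have ht₁B : t₁ ∈ B := hBclosed.csInf_mem ⟨t₂, hBne⟩ hBbdd
  have ht₁0 : 0 ≤ t₁ := ht₁B.1
  have h0notB : (0:ℝ) ∉ B := by
    intro h
    exact absurd h.2 (not_le.mpr (lt_of_lt_of_le hx0 (min_le_right _ _)))
  have ht₁pos : 0 < t₁ := lt_of_le_of_ne ht₁0 (fun h => h0notB (h ▸ ht₁B))
  have hlt : ∀ u, 0 ≤ u → u < t₁ → ‖x u - x₀‖ < r := by
    intro u hu hut
    by_contra hge
    push_neg at hge
    exact absurd (csInf_le hBbdd ⟨hu, hge⟩) (not_le.mpr hut)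
  have hle : ∀ u ∈ Set.Icc (0:ℝ) t₁, ‖x u - x₀‖ ≤ r := by
    set C := Set.Icc (0:ℝ) t₁ ∩ (fun t => ‖x t - x₀‖) ⁻¹' Set.Iic r with hC
    have hCclosed : IsClosed C :=
      ContinuousOn.preimage_isClosed_of_isClosed
        (((hxc.mono Set.Icc_subset_Ici_self).sub continuousOn_const).norm)
        isClosed_Icc isClosed_Iic
    have hsub : Set.Ico 0 t₁ ⊆ C := fun u hu => ⟨⟨hu.1, hu.2.le⟩, (hlt u hu.1 hu.2).le⟩
    have hIcc : Set.Icc (0:ℝ) t₁ ⊆ C := by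
      rw [← closure_Ico (ne_of_lt ht₁pos)]
      exact closure_minimal hsub hCclosed
    exact fun u hu => (hIcc hu).2
  have hposu : ∀ u ∈ Set.Icc (0:ℝ) t₁, ∀ i, 0 < x u i := fun u hu => hball_pos _ (hle u hu)
  -- W is constant along the solution on [0, t₁]
  have hWx : ∀ u ∈ Set.Icc (0:ℝ) t₁, W (x u) = W (x 0) := by
    apply constant_of_has_deriv_right_zero
    · intro u hu
      exact (hWcontAt (x u) (hposu u hu)).comp_continuousWithinAt
        ((hxc.mono Set.Icc_subset_Ici_self) u hu)
    · intro u hu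
      have hpos : ∀ i, 0 < x u i := hposu u ⟨hu.1, hu.2.le⟩
      have hxd := hx u hu.1
      have hx' : ∀ i, HasDerivAt (fun t => x t i) (F (x u) i) u := by
        intro i
        exact (ContinuousLinearMap.proj i :
          (Fin m → ℝ) →L[ℝ] ℝ).hasFDerivAt.comp_hasDerivAt u hxd
      have hterm : ∀ i, HasDerivAt (fun t => c i * (x t i - x₀ i * Real.log (x t i)))
          (c i * (F (x u) i - x₀ i * (F (x u) i / x u i))) u := fun i =>
        (((hx' i).sub (((hx' i).log (ne_of_gt (hpos i))).const_mul (x₀ i))).const_mul (c i))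
      have hsum := HasDerivAt.sum (fun i (_ : i ∈ Finset.univ) => hterm i)
      have hz : (∑ i, c i * (F (x u) i - x₀ i * (F (x u) i / x u i))) = 0 := by
        set p := x u with hp
        set g := A.mulVec (p - x₀) with hg
        set z : Fin m → ℝ := fun j => d j * (p j - x₀ j) with hzdef
        have step1 : (∑ i, c i * (F p i - x₀ i * (F p i / p i)))
            = ∑ i, s * (z i * (K.mulVec z) i) := by
          refine Finset.sum_congr rfl fun i _ => ?_
          have hgi : g i = (K.mulVec z) i := by
            rw [hg, hA]
            simp only [Matrix.mulVec, dotProduct]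
            refine Finset.sum_congr rfl fun j _ => ?_
            rw [Matrix.mul_diagonal]
            simp only [Pi.sub_apply, hzdef]
            ring
          rw [hFform p i]
          rw [show (A.mulVec (p - x₀)) i = g i from rfl, hgi]
          set q := (K.mulVec z) i with hq
          have hdc : p i * q / p i = q := by
            rw [mul_comm]
            exact mul_div_cancel_right₀ q (ne_of_gt (hpos i))
          rw [hdc]
          have hci : c i = s * d i := rfl
          have hzi : z i = d i * (p i - x₀ i) := rfl
          rw [hci, hzi]
          ring
        rw [step1, ← Finset.mul_sum]
        have : (∑ i, z i * (K.mulVec z) i) = z ⬝ᵥ K.mulVec z := by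
          simp [dotProduct]
        rw [this, skew_quad K hK z, mul_zero]
      rw [hz] at hsum
      convert hsum.hasDerivWithinAt using 1
      ext t
      simp only [Finset.sum_apply]
      rfl
  have h1 : W (x t₁) = W (x 0) := hWx t₁ ⟨ht₁0, le_refl _⟩
  have h2 : W (x 0) < M := by
    have hmem : x 0 ∈ Metric.ball x₀ δ' := by
      rw [Metric.mem_ball, dist_eq_norm]
      exact lt_of_lt_of_le hx0 (min_le_left _ _)
    exact hδ' hmem
  have h3 : M ≤ W (x t₁) := by
    apply hy₀min
    rw [Metric.mem_sphere, dist_eq_norm]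
    exact le_antisymm (hle t₁ ⟨ht₁0, le_refl _⟩) ht₁B.2
  linarith
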